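/- arXiv:2511.08304 — 4 statements merged into one kernel-verified Lean document; each statement's English description precedes it below -/
import Mathlib

section
/- Let X = A_1 × ⋯ × A_m be a Cartesian set over F_q with |A_i| ≥ 2 for all i, and let 0 ≤ d ≤ m. Then dim_{F_q}(C_d^{X,S}) = C(m,d) and dim_{F_q}(C_{≤d}^{X,S}) = Σ_{i=0}^{d} C(m,i). -/
/-- Square-free exponent vectors of total degree `d` in `m` variables. -/
def Sd (m d : ℕ) : Set (Fin m → ℕ) := {a | (∀ i, a i ≤ 1) ∧ ∑ i, a i = d}

/-- Square-free exponent vectors of total degree at most `d` in `m` variables. -/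
def Sle (m d : ℕ) : Set (Fin m → ℕ) := {a | (∀ i, a i ≤ 1) ∧ ∑ i, a i ≤ d}

/-- Evaluation code over the Cartesian set `X = A 0 × ⋯ × A (m-1)`, spanned by the
evaluations of the monomials `x^a` for `a ∈ S`. -/
noncomputable def evalCodeX {F : Type*} [Field F] {m : ℕ} (A : Fin m → Finset F)
    (S : Set (Fin m → ℕ)) :
    Submodule F ({P : Fin m → F // ∀ i, P i ∈ A i} → F) :=
  Submodule.span F ((fun (a : Fin m → ℕ) (P : {P : Fin m → F // ∀ i, P i ∈ A i}) =>
    ∏ i, P.1 i ^ a i) '' S)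

open Classical in
/-- Support of a linear code. -/
noncomputable def codeSupp {F ι : Type*} [Field F] [Fintype ι]
    (C : Submodule F (ι → F)) : Finset ι :=
  Finset.univ.filter (fun i => ∃ c ∈ C, c i ≠ 0)

/-- The `r`-th generalized Hamming weight of a linear code: the minimum cardinality of the
support of an `r`-dimensional subcode. -/
noncomputable def GHW {F ι : Type*} [Field F] [Fintype ι]
    (C : Submodule F (ι → F)) (r : ℕ) : ℕ :=
  sInf {k | ∃ C' : Submodule F (ι → F),
    C' ≤ C ∧ Module.finrank F C' = r ∧ (codeSupp C').card = k}

section aux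
open Finset
variable {F : Type*} [Field F] {m : ℕ}

variable {F : Type*} [Field F] {m : ℕ}

def msf (A : Fin m → Finset F) (S : Finset (Fin m))
    (P : {P : Fin m → F // ∀ i, P i ∈ A i}) : F := ∏ i ∈ S, P.1 i

lemma mono_eq_msf (A : Fin m → Finset F) (a : Fin m → ℕ) (ha : ∀ i, a i ≤ 1) :
    (fun (P : {P : Fin m → F // ∀ i, P i ∈ A i}) => ∏ i, P.1 i ^ a i)
      = msf A (Finset.univ.filter fun i => a i = 1) := by
  funext P
  unfold msf
  rw [Finset.prod_filter]
  refine Finset.prod_congr rfl fun i _ => ?_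
  rcases Nat.le_one_iff_eq_zero_or_eq_one.mp (ha i) with h | h <;> simp [h]

lemma card_filter_eq_sum (a : Fin m → ℕ) (ha : ∀ i, a i ≤ 1) :
    (Finset.univ.filter fun i => a i = 1).card = ∑ i, a i := by
  rw [Finset.card_filter]
  exact Finset.sum_congr rfl fun i _ =>
    (by rcases Nat.le_one_iff_eq_zero_or_eq_one.mp (ha i) with h | h <;> simp [h])

lemma indicator_mem (S : Finset (Fin m)) :
    (∀ i, (if i ∈ S then 1 else 0 : ℕ) ≤ 1) ∧
    (∑ i, (if i ∈ S then 1 else 0 : ℕ)) = S.card := by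
  constructor
  · intro i; split <;> omega
  · simp

lemma msf_eq_mono (A : Fin m → Finset F) (S : Finset (Fin m)) :
    msf A S = fun (P : {P : Fin m → F // ∀ i, P i ∈ A i}) =>
      ∏ i, P.1 i ^ (if i ∈ S then 1 else 0 : ℕ) := by
  funext P
  unfold msf
  calc ∏ i ∈ S, P.1 i = ∏ i ∈ Finset.univ.filter (· ∈ S), P.1 i := by
        congr 1; ext; simp
    _ = ∏ i, (if i ∈ S then P.1 i else 1) := Finset.prod_filter _ _
    _ = ∏ i, P.1 i ^ (if i ∈ S then 1 else 0 : ℕ) :=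
        Finset.prod_congr rfl fun i _ => by split <;> simp

lemma image_Sd (A : Fin m → Finset F) (d : ℕ) :
    ((fun (a : Fin m → ℕ) (P : {P : Fin m → F // ∀ i, P i ∈ A i}) =>
      ∏ i, P.1 i ^ a i) '' (Sd m d)) = msf A '' {S : Finset (Fin m) | S.card = d} := by
  ext f
  constructor
  · rintro ⟨a, ⟨ha1, ha2⟩, rfl⟩
    exact ⟨Finset.univ.filter fun i => a i = 1, by rw [Set.mem_setOf_eq, card_filter_eq_sum a ha1]; exact ha2,
      (mono_eq_msf A a ha1).symm⟩
  · rintro ⟨S, hS, rfl⟩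
    refine ⟨fun i => if i ∈ S then 1 else 0, ⟨(indicator_mem S).1, ?_⟩, (msf_eq_mono A S).symm⟩
    rw [(indicator_mem S).2]; exact hS

lemma image_Sle (A : Fin m → Finset F) (d : ℕ) :
    ((fun (a : Fin m → ℕ) (P : {P : Fin m → F // ∀ i, P i ∈ A i}) =>
      ∏ i, P.1 i ^ a i) '' (Sle m d)) = msf A '' {S : Finset (Fin m) | S.card ≤ d} := by
  ext f
  constructor
  · rintro ⟨a, ⟨ha1, ha2⟩, rfl⟩
    exact ⟨Finset.univ.filter fun i => a i = 1, by rw [Set.mem_setOf_eq, card_filter_eq_sum a ha1]; exact ha2,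
      (mono_eq_msf A a ha1).symm⟩
  · rintro ⟨S, hS, rfl⟩
    refine ⟨fun i => if i ∈ S then 1 else 0, ⟨(indicator_mem S).1, ?_⟩, (msf_eq_mono A S).symm⟩
    rw [(indicator_mem S).2]; exact hS

lemma card_le_subtype (m d : ℕ) (hdm : d ≤ m) :
    Fintype.card {S : Finset (Fin m) // S.card ≤ d} = ∑ i ∈ Finset.range (d + 1), m.choose i := by
  rw [Fintype.card_subtype]
  rw [Finset.card_eq_sum_card_fiberwise (f := Finset.card) (t := Finset.range (d+1))
    (fun S hS => by simp at hS ⊢; omega)]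
  refine Finset.sum_congr rfl fun i hi => ?_
  rw [Finset.mem_range] at hi
  have h : (Finset.univ.filter fun S : Finset (Fin m) => S.card ≤ d).filter (fun S => S.card = i)
      = Finset.univ.filter fun S : Finset (Fin m) => S.card = i := by
    ext S; simp; omega
  rw [h, ← Fintype.card_subtype, Fintype.card_finset_len, Fintype.card_fin]

lemma finrank_msf_span (A : Fin m → Finset F) (hcard : ∀ i, 2 ≤ (A i).card)
    (li : LinearIndependent F (msf A)) (p : Finset (Fin m) → Prop) [DecidablePred p] :
    Module.finrank F (Submodule.span F (msf A '' {S | p S}))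
      = Fintype.card {S : Finset (Fin m) // p S} := by
  have hli := li.comp (Subtype.val : {S : Finset (Fin m) // p S} → _) Subtype.val_injective
  have h := finrank_span_eq_card hli
  rwa [Set.range_comp, Subtype.range_coe_subtype] at h

lemma msf_li (A : Fin m → Finset F) (hcard : ∀ i, 2 ≤ (A i).card) :
    LinearIndependent F (msf A) := by
  have h2 : ∀ i, ∃ a ∈ A i, ∃ b ∈ A i, a ≠ b :=
    fun i => Finset.one_lt_card.mp (by have := hcard i; omega)
  choose u hu v hv huv using h2
  have hvu : ∀ i, v i - u i ≠ 0 := fun i => sub_ne_zero.mpr (Ne.symm (huv i))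
  set Pt : Finset (Fin m) → {P : Fin m → F // ∀ i, P i ∈ A i} :=
    fun R => ⟨fun i => if i ∈ R then v i else u i,
      fun i => by dsimp only; split
                  · exact hv i
                  · exact hu i⟩ with hPt
  have keyA : ∀ T S : Finset (Fin m),
      ∑ R ∈ T.powerset, (-1:F)^(T.card - R.card) * msf A S (Pt R)
        = (∏ i ∈ S \ T, u i) * ∏ i ∈ T, (if i ∈ S then v i - u i else 0) := by
    intro T S
    have hterm : ∀ R ∈ T.powerset,
        (-1:F)^(T.card - R.card) * msf A S (Pt R)
          = (∏ i ∈ S \ T, u i) *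
            ((∏ i ∈ R, (if i ∈ S then v i else 1)) *
             ∏ i ∈ T \ R, (if i ∈ S then -u i else -1)) := by
      intro R hR
      rw [Finset.mem_powerset] at hR
      have h1 : msf A S (Pt R)
          = (∏ i ∈ S \ T, u i) * ∏ i ∈ S ∩ T, (if i ∈ R then v i else u i) := by
        unfold msf
        rw [← Finset.prod_sdiff (Finset.inter_subset_left : S ∩ T ⊆ S),
            sdiff_inter_self_left S T]
        congr 1
        refine Finset.prod_congr rfl fun i hi => ?_
        have : i ∉ R := fun h => (Finset.mem_sdiff.mp hi).2 (hR h)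
        simp [hPt, this]
      have h2 : ∏ i ∈ S ∩ T, (if i ∈ R then v i else u i)
          = ∏ i ∈ T, (if i ∈ S then (if i ∈ R then v i else u i) else 1) := by
        rw [← Finset.prod_filter]
        congr 1
        ext i
        simp [Finset.mem_inter, and_comm]
      have h3 : (-1:F)^(T.card - R.card) = ∏ i ∈ T \ R, (-1:F) := by
        rw [Finset.prod_const, Finset.card_sdiff_of_subset hR]
      rw [h1, h2, ← Finset.prod_sdiff hR, h3]
      have h4 : ∏ i ∈ R, (if i ∈ S then (if i ∈ R then v i else u i) else 1)
          = ∏ i ∈ R, (if i ∈ S then v i else 1) :=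
        Finset.prod_congr rfl fun i hi => by simp [hi]
      have h5 : (∏ i ∈ T \ R, (-1:F)) * ∏ i ∈ T \ R, (if i ∈ S then (if i ∈ R then v i else u i) else 1)
          = ∏ i ∈ T \ R, (if i ∈ S then -u i else -1) := by
        rw [← Finset.prod_mul_distrib]
        refine Finset.prod_congr rfl fun i hi => ?_
        have : i ∉ R := (Finset.mem_sdiff.mp hi).2
        by_cases h : i ∈ S <;> simp [h, this]
      rw [h4] at *
      ring_nf
      ring_nf at h5
      rw [← h5]
      ring
    rw [Finset.sum_congr rfl hterm, ← Finset.mul_sum, ← Finset.prod_add]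
    congr 1
    refine Finset.prod_congr rfl fun i _ => ?_
    by_cases h : i ∈ S <;> simp [h] <;> ring
  -- main argument
  rw [Fintype.linearIndependent_iff]
  intro g hg
  have hev : ∀ R : Finset (Fin m), ∑ S : Finset (Fin m), g S * msf A S (Pt R) = 0 := by
    intro R
    have := congrFun hg (Pt R)
    simpa [Finset.sum_apply] using this
  have key : ∀ T : Finset (Fin m), (∀ S, T ⊂ S → g S = 0) → g T = 0 := by
    intro T hT
    have h0 : ∑ S : Finset (Fin m),
        g S * ((∏ i ∈ S \ T, u i) * ∏ i ∈ T, (if i ∈ S then v i - u i else 0)) = 0 := by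
      calc ∑ S : Finset (Fin m),
            g S * ((∏ i ∈ S \ T, u i) * ∏ i ∈ T, (if i ∈ S then v i - u i else 0))
          = ∑ S : Finset (Fin m), g S * ∑ R ∈ T.powerset, (-1:F)^(T.card - R.card) * msf A S (Pt R) := by
            refine Finset.sum_congr rfl fun S _ => ?_
            rw [keyA T S]
        _ = ∑ R ∈ T.powerset, (-1:F)^(T.card - R.card) * ∑ S : Finset (Fin m), g S * msf A S (Pt R) := by
            simp_rw [Finset.mul_sum]
            rw [Finset.sum_comm]
            refine Finset.sum_congr rfl fun R _ => ?_
            refine Finset.sum_congr rfl fun S _ => ?_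
            ring
        _ = 0 := by simp [hev]
    rw [Finset.sum_eq_single T] at h0
    · have : (∏ i ∈ T, (v i - u i)) ≠ 0 := Finset.prod_ne_zero_iff.mpr fun i _ => hvu i
      have h0' : g T * ∏ i ∈ T, (v i - u i) = 0 := by
        rw [Finset.prod_congr rfl (fun i hi => if_pos hi :
          ∀ i ∈ T, (if i ∈ T then v i - u i else 0) = v i - u i)] at h0
        simpa using h0
      rcases mul_eq_zero.mp h0' with h | h
      · exact h
      · exact absurd h this
    · intro S _ hST
      by_cases hTS : T ⊆ S
      · rw [hT S (lt_of_le_of_ne hTS (Ne.symm hST))]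
        ring
      · obtain ⟨i, hiT, hiS⟩ := Finset.not_subset.mp hTS
        rw [Finset.prod_eq_zero hiT (by simp [hiS])]
        ring
    · simp
  -- strong induction on complement size
  suffices H : ∀ n (T : Finset (Fin m)), m - T.card ≤ n → g T = 0 by
    intro T; exact H m T (Nat.sub_le m _)
  intro n
  induction n with
  | zero =>
      intro T hTc
      refine key T fun S hS => absurd (Finset.card_lt_card hS) (by
        have hS' : S.card ≤ m := by simpa using Finset.card_le_card (Finset.subset_univ S)
        omega)
  | succ n ih =>
      intro T hTc
      refine key T fun S hS => ih S ?_
      have h1 := Finset.card_lt_card hS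
      have hS' : S.card ≤ m := by simpa using Finset.card_le_card (Finset.subset_univ S)
      omega


end aux

/-- For a Cartesian set `X = A_1 × ⋯ × A_m` with `|A_i| ≥ 2` for all `i`
and `0 ≤ d ≤ m`, the Cartesian square-free codes satisfy `dim C_d^{X,S} = C(m,d)` and
`dim C_{≤d}^{X,S} = Σ_{i=0}^{d} C(m,i)`. -/
theorem dim_cartesian_squarefree
    {F : Type*} [Field F] [Fintype F] [DecidableEq F] {m d : ℕ}
    (A : Fin m → Finset F)
    (hcard : ∀ i, 2 ≤ (A i).card)
    (hmono : ∀ i j : Fin m, i ≤ j → (A i).card ≤ (A j).card)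
    (hdm : d ≤ m) :
    Module.finrank F (evalCodeX A (Sd m d)) = m.choose d ∧
    Module.finrank F (evalCodeX A (Sle m d)) = ∑ i ∈ Finset.range (d + 1), m.choose i := by
  have li := msf_li A hcard
  constructor
  · rw [show evalCodeX A (Sd m d) = Submodule.span F (msf A '' {S : Finset (Fin m) | S.card = d})
        from congrArg _ (image_Sd A d),
      finrank_msf_span A hcard li (fun S => S.card = d),
      Fintype.card_finset_len, Fintype.card_fin]
  · rw [show evalCodeX A (Sle m d) = Submodule.span F (msf A '' {S : Finset (Fin m) | S.card ≤ d})
        from congrArg _ (image_Sle A d),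
      finrank_msf_span A hcard li (fun S => S.card ≤ d),
      card_le_subtype m d hdm]
end

section
/- Let 1 ≤ d ≤ m+1 and let ξ be a primitive element of F_q. Identify F_q^{m+1} ∖ {0} with the product (Fin (q−1)) × P^m via the bijection (i, Q) ↦ ξ^i·Q. Under this identification, the affine square-free code C_d^{A,S}(m+1) ⊆ F_q^{(Fin (q−1)) × P^m} equals the set of vectors {(i, Q) ↦ ξ^{d·i}·c(Q) : c ∈ C_d^{P,S}(m)}; that is, C_d^{A,S}(m+1) = (1, ξ^d, ξ^{2d}, …, ξ^{d(q−2)}) ⊗ C_d^{P,S}(m). -/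
/-- Evaluation code: the span of the evaluations of the monomials `x^a`, `a ∈ S`, at the
family of points `pt : Y → F^N`. -/
noncomputable def evCode {F : Type*} [Field F] {N : ℕ} {Y : Type*} (pt : Y → (Fin N → F))
    (S : Set (Fin N → ℕ)) : Submodule F (Y → F) :=
  Submodule.span F ((fun (a : Fin N → ℕ) (y : Y) => ∏ i, pt y i ^ a i) '' S)

/-- Pullback of functions along a map of index sets, as a linear map. -/
def pullbackMap {F : Type*} [Field F] {X Y : Type*} (φ : Y → X) :
    (X → F) →ₗ[F] (Y → F) where
  toFun w := w ∘ φ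
  map_add' _ _ := rfl
  map_smul' _ _ := rfl

/-- The "tensor" map `c ↦ ((i, y) ↦ ξ^{d·i} · c y)`, realizing
`(1, ξ^d, …, ξ^{d(k−1)}) ⊗ c`. -/
def twistMap {F : Type*} [Field F] {Y : Type*} (k : ℕ) (ξ : F) (d : ℕ) :
    (Y → F) →ₗ[F] (Fin k × Y → F) where
  toFun c := fun p => ξ ^ (d * (p.1 : ℕ)) * c p.2
  map_add' c₁ c₂ := by funext p; simp [mul_add]
  map_smul' t c := by funext p; simp only [Pi.smul_apply, smul_eq_mul, RingHom.id_apply]; ring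

/-- Let `1 ≤ d ≤ m+1`, let `ξ` be a primitive element of `F_q`, and let
`P^m` be a set of representatives of projective space. Identifying `F_q^{m+1} ∖ {0}` with
`Fin (q−1) × P^m` via the bijection `(i, Q) ↦ ξ^i • Q`, the affine square-free code
`C_d^{A,S}(m+1)` equals `(1, ξ^d, ξ^{2d}, …, ξ^{d(q−2)}) ⊗ C_d^{P,S}(m)`. -/
theorem affine_squarefree_eq_tensor_projective
    {F : Type*} [Field F] [Fintype F] [DecidableEq F] {m d : ℕ}
    (hd1 : 1 ≤ d) (hdm : d ≤ m + 1)
    (Pm : Finset (Fin (m + 1) → F))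
    (hPm0 : ∀ Q ∈ Pm, Q ≠ 0)
    (hrep : ∀ v : Fin (m + 1) → F, v ≠ 0 →
      ∃! p : Fˣ × (Fin (m + 1) → F), p.2 ∈ Pm ∧ v = (p.1 : F) • p.2)
    (ξ : F) (hξ0 : ξ ≠ 0) (hξ : ∀ a : F, a ≠ 0 → ∃ k : ℕ, ξ ^ k = a)
    (φ : Fin (Fintype.card F - 1) × {Q // Q ∈ Pm} → {v : Fin (m + 1) → F // v ≠ 0})
    (hφ : ∀ p : Fin (Fintype.card F - 1) × {Q // Q ∈ Pm},
      (φ p : Fin (m + 1) → F) = ξ ^ (p.1 : ℕ) • (p.2 : Fin (m + 1) → F)) :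
    Function.Bijective φ ∧
      Submodule.map (pullbackMap φ)
          (evCode (Subtype.val : {v : Fin (m + 1) → F // v ≠ 0} → (Fin (m + 1) → F))
            (Sd (m + 1) d)) =
        Submodule.map (twistMap (Fintype.card F - 1) ξ d)
          (evCode (fun Q : {Q // Q ∈ Pm} => (Q : Fin (m + 1) → F)) (Sd (m + 1) d)) := by
  classical
  have hn0 : 0 < Fintype.card F - 1 := by
    have h2 : 2 ≤ Fintype.card F := Fintype.one_lt_card
    omega
  set ξu : Fˣ := Units.mk0 ξ hξ0 with hξu
  have hord : orderOf ξu = Fintype.card F - 1 := by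
    have h : orderOf ξu = Nat.card Fˣ := orderOf_eq_card_of_forall_mem_zpowers (fun u => by
      obtain ⟨k, hk⟩ := hξ (u : F) u.ne_zero
      exact ⟨(k : ℤ), Units.ext (by push_cast; simpa [hξu] using hk)⟩)
    rw [h, Nat.card_eq_fintype_card, Fintype.card_units]
  have hpoweq : ∀ i j : Fin (Fintype.card F - 1), ξ ^ (i : ℕ) = ξ ^ (j : ℕ) → i = j := by
    intro i j hpow
    have hpu : ξu ^ (i : ℕ) = ξu ^ (j : ℕ) := Units.ext (by push_cast; simpa [hξu] using hpow)
    have hmod := pow_eq_pow_iff_modEq.mp hpu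
    rw [hord] at hmod
    exact Fin.ext (Nat.ModEq.eq_of_lt_of_lt hmod i.isLt j.isLt)
  have hbij : Function.Bijective φ := by
    constructor
    · rintro ⟨i, Q⟩ ⟨j, Q'⟩ h
      have hv : (φ (i, Q) : Fin (m+1) → F) ≠ 0 := (φ (i, Q)).prop
      set q1 : Fˣ × (Fin (m+1) → F) :=
        (Units.mk0 (ξ ^ (i : ℕ)) (pow_ne_zero _ hξ0), (Q : Fin (m+1) → F)) with hq1
      set q2 : Fˣ × (Fin (m+1) → F) :=
        (Units.mk0 (ξ ^ (j : ℕ)) (pow_ne_zero _ hξ0), (Q' : Fin (m+1) → F)) with hq2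
      have h1 : q1.2 ∈ Pm ∧ (φ (i, Q) : Fin (m+1) → F) = (q1.1 : F) • q1.2 :=
        ⟨Q.prop, by rw [hφ (i, Q)]; rfl⟩
      have h2 : q2.2 ∈ Pm ∧ (φ (i, Q) : Fin (m+1) → F) = (q2.1 : F) • q2.2 :=
        ⟨Q'.prop, by rw [h, hφ (j, Q')]; rfl⟩
      have huniq : q1 = q2 := (hrep _ hv).unique h1 h2
      have hQQ : (Q : Fin (m+1) → F) = (Q' : Fin (m+1) → F) := congrArg Prod.snd huniq
      have hpow : ξ ^ (i : ℕ) = ξ ^ (j : ℕ) := by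
        have := congrArg (fun p => ((p.1 : Fˣ) : F)) huniq
        simpa [hq1, hq2] using this
      exact Prod.ext (hpoweq i j hpow) (Subtype.ext hQQ)
    · rintro ⟨v, hv⟩
      obtain ⟨⟨u, Q⟩, ⟨hQ, hvu⟩, -⟩ := hrep v hv
      obtain ⟨k, hk⟩ := hξ (u : F) u.ne_zero
      refine ⟨(⟨k % (Fintype.card F - 1), Nat.mod_lt _ hn0⟩, ⟨Q, hQ⟩), ?_⟩
      apply Subtype.ext
      rw [hφ]
      have hξk : ξ ^ (k % (Fintype.card F - 1)) = ξ ^ k := by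
        have h' : ξu ^ (k % (Fintype.card F - 1)) = ξu ^ k := by
          apply pow_eq_pow_iff_modEq.mpr
          rw [hord]
          exact Nat.mod_modEq k _
        have := congrArg Units.val h'
        simpa [hξu] using this
      show ξ ^ (k % (Fintype.card F - 1)) • Q = v
      rw [hξk, hk]
      exact hvu.symm
  refine ⟨hbij, ?_⟩
  rw [evCode, evCode, Submodule.map_span, Submodule.map_span, ← Set.image_comp,
    ← Set.image_comp]
  congr 1
  apply Set.image_congr
  intro a ha
  obtain ⟨ha1, ha2⟩ := ha
  funext p
  simp only [Function.comp_apply, pullbackMap, twistMap, LinearMap.coe_mk, AddHom.coe_mk,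
    Function.comp_apply]
  show ∏ i, (φ p : Fin (m+1) → F) i ^ a i
      = ξ ^ (d * (p.1 : ℕ)) * ∏ i, (p.2 : Fin (m+1) → F) i ^ a i
  rw [hφ]
  simp only [Pi.smul_apply, smul_eq_mul, mul_pow, Finset.prod_mul_distrib,
    Finset.prod_pow_eq_pow_sum, ha2, ← pow_mul]
  rw [← Finset.mul_sum, ha2, Nat.mul_comm]
end

section
/- Let 1 ≤ d ≤ m+1. Then dim_{F_q}(C_d^{A,S}(m+1)) = dim_{F_q}(C_d^{P,S}(m)), and for every 1 ≤ r ≤ C(m+1, d) one has d_r(C_d^{A,S}(m+1)) = (q−1)·d_r(C_d^{P,S}(m)). -/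
lemma nat_sInf_mul (c : ℕ) (S : Set ℕ) :
    sInf ((fun k => c * k) '' S) = c * sInf S := by
  rcases S.eq_empty_or_nonempty with h | h
  · simp [h, Nat.sInf_empty]
  · apply le_antisymm
    · exact Nat.sInf_le ⟨sInf S, Nat.sInf_mem h, rfl⟩
    · obtain ⟨k, hk, hk2⟩ := Nat.sInf_mem (h.image (fun k => c * k))
      rw [← hk2]
      exact Nat.mul_le_mul_left c (Nat.sInf_le hk)

lemma ghw_map {F ι κ : Type*} [Field F] [Fintype ι] [Fintype κ]
    (T : (κ → F) →ₗ[F] (ι → F)) (hT : Function.Injective T) (c : ℕ)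
    (hsupp : ∀ C'' : Submodule F (κ → F),
      (codeSupp (C''.map T)).card = c * (codeSupp C'').card)
    (CP : Submodule F (κ → F)) (r : ℕ) :
    GHW (CP.map T) r = c * GHW CP r := by
  unfold GHW
  rw [← nat_sInf_mul]
  congr 1
  ext k
  constructor
  · rintro ⟨C', hle, hrank, hcard⟩
    refine ⟨(codeSupp (C'.comap T)).card, ⟨C'.comap T, ?_, ?_, rfl⟩, ?_⟩
    · exact le_trans (Submodule.comap_mono hle)
        (le_of_eq (Submodule.comap_map_eq_of_injective hT CP))
    · have hC' : Submodule.map T (C'.comap T) = C' := by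
        rw [Submodule.map_comap_eq, inf_eq_right.mpr]
        exact le_trans hle LinearMap.map_le_range
      have h2 := (Submodule.equivMapOfInjective T hT (C'.comap T)).finrank_eq
      rw [hC'] at h2
      rw [h2, hrank]
    · have hC' : Submodule.map T (C'.comap T) = C' := by
        rw [Submodule.map_comap_eq, inf_eq_right.mpr]
        exact le_trans hle LinearMap.map_le_range
      show c * _ = k
      rw [← hsupp, hC', hcard]
  · rintro ⟨k', ⟨C'', hle, hrank, hcard⟩, rfl⟩
    refine ⟨C''.map T, Submodule.map_mono hle, ?_, by rw [hsupp, hcard]⟩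
    rw [← hrank]
    exact (Submodule.equivMapOfInjective T hT C'').finrank_eq.symm

/-- Let `1 ≤ d ≤ m+1`. Then `dim C_d^{A,S}(m+1) = dim C_d^{P,S}(m)`, and
for every `1 ≤ r ≤ C(m+1,d)` one has `d_r(C_d^{A,S}(m+1)) = (q−1) · d_r(C_d^{P,S}(m))`. -/
theorem dim_and_ghw_affine_vs_projective_squarefree
    {F : Type*} [Field F] [Fintype F] [DecidableEq F] {m d : ℕ}
    (hd1 : 1 ≤ d) (hdm : d ≤ m + 1)
    (Pm : Finset (Fin (m + 1) → F))
    (hPm0 : ∀ Q ∈ Pm, Q ≠ 0)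
    (hrep : ∀ v : Fin (m + 1) → F, v ≠ 0 →
      ∃! p : Fˣ × (Fin (m + 1) → F), p.2 ∈ Pm ∧ v = (p.1 : F) • p.2) :
    Module.finrank F
        (evCode (Subtype.val : {v : Fin (m + 1) → F // v ≠ 0} → (Fin (m + 1) → F))
          (Sd (m + 1) d)) =
      Module.finrank F
        (evCode (fun Q : {Q // Q ∈ Pm} => (Q : Fin (m + 1) → F)) (Sd (m + 1) d)) ∧
    ∀ r : ℕ, 1 ≤ r → r ≤ (m + 1).choose d →
      GHW (evCode (Subtype.val : {v : Fin (m + 1) → F // v ≠ 0} → (Fin (m + 1) → F))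
          (Sd (m + 1) d)) r =
        (Fintype.card F - 1) *
          GHW (evCode (fun Q : {Q // Q ∈ Pm} => (Q : Fin (m + 1) → F)) (Sd (m + 1) d)) r := by
  classical
  -- choose the unique representation v = λ • Q
  choose p hpmem hpeq using fun v : {v : Fin (m + 1) → F // v ≠ 0} => (hrep v.1 v.2).exists
  let lam : {v : Fin (m + 1) → F // v ≠ 0} → Fˣ := fun v => (p v).1
  let pz : {v : Fin (m + 1) → F // v ≠ 0} → {Q // Q ∈ Pm} := fun v => ⟨(p v).2, hpmem v⟩
  have hveq : ∀ v : {v : Fin (m + 1) → F // v ≠ 0}, v.1 = ((lam v : F)) • (pz v).1 := hpeq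
  have hsmul_ne : ∀ (l : Fˣ) (z : {Q // Q ∈ Pm}), (l : F) • z.1 ≠ 0 := by
    intro l z h
    exact hPm0 z.1 z.2 ((smul_eq_zero.mp h).resolve_left l.ne_zero)
  have hlam_pz : ∀ (l : Fˣ) (z : {Q // Q ∈ Pm}) (v : {v : Fin (m + 1) → F // v ≠ 0}),
      v.1 = (l : F) • z.1 → lam v = l ∧ pz v = z := by
    intro l z v hv
    have hb : ((l, z.1) : Fˣ × (Fin (m + 1) → F)).2 ∈ Pm ∧
        v.1 = (((l, z.1) : Fˣ × (Fin (m + 1) → F)).1 : F) • ((l, z.1) : Fˣ × (Fin (m + 1) → F)).2 :=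
      ⟨z.2, hv⟩
    have h := (hrep v.1 v.2).unique ⟨hpmem v, hpeq v⟩ hb
    exact ⟨show (p v).1 = l by rw [h], Subtype.ext (show (p v).2 = z.1 by rw [h])⟩
  -- the comparison linear map
  let T : ({Q // Q ∈ Pm} → F) →ₗ[F] ({v : Fin (m + 1) → F // v ≠ 0} → F) :=
    { toFun := fun g v => ((lam v : F)) ^ d * g (pz v)
      map_add' := by intro g1 g2; funext v; simp [mul_add]
      map_smul' := by intro c g; funext v; simp [smul_eq_mul]; ring }
  have hTval : ∀ (g : {Q // Q ∈ Pm} → F) (l : Fˣ) (z : {Q // Q ∈ Pm}),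
      T g ⟨(l : F) • z.1, hsmul_ne l z⟩ = (l : F) ^ d * g z := by
    intro g l z
    obtain ⟨h1, h2⟩ := hlam_pz l z ⟨(l : F) • z.1, hsmul_ne l z⟩ rfl
    show ((lam _ : F)) ^ d * g (pz _) = _
    rw [h1, h2]
  have hTinj : Function.Injective T := by
    intro g1 g2 h
    funext z
    have h1 := congrFun h ⟨((1 : Fˣ) : F) • z.1, hsmul_ne 1 z⟩
    rw [hTval, hTval] at h1
    simpa using h1
  -- the affine code is the image of the projective code
  have hcode : evCode (Subtype.val : {v : Fin (m + 1) → F // v ≠ 0} → (Fin (m + 1) → F))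
        (Sd (m + 1) d) =
      Submodule.map T (evCode (fun Q : {Q // Q ∈ Pm} => (Q : Fin (m + 1) → F))
        (Sd (m + 1) d)) := by
    unfold evCode
    rw [Submodule.map_span, Set.image_image]
    congr 1
    refine (Set.image_congr ?_).symm
    intro a ha
    funext v
    show ((lam v : F)) ^ d * ∏ i, (pz v).1 i ^ a i = ∏ i, v.1 i ^ a i
    conv_rhs => rw [hveq v]
    simp only [Pi.smul_apply, smul_eq_mul, mul_pow, Finset.prod_mul_distrib,
      Finset.prod_pow_eq_pow_sum]
    rw [ha.2]
  -- support scaling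
  have hsupp : ∀ C'' : Submodule F ({Q // Q ∈ Pm} → F),
      (codeSupp (Submodule.map T C'')).card = (Fintype.card F - 1) * (codeSupp C'').card := by
    intro C''
    have hmem : ∀ v : {v : Fin (m + 1) → F // v ≠ 0},
        v ∈ codeSupp (Submodule.map T C'') ↔ ∃ c ∈ C'', c (pz v) ≠ 0 := by
      intro v
      simp only [codeSupp, Finset.mem_filter, Finset.mem_univ, true_and]
      constructor
      · rintro ⟨c, ⟨c0, hc0, rfl⟩, hcv⟩
        refine ⟨c0, hc0, fun h => hcv ?_⟩
        show ((lam v : F)) ^ d * c0 (pz v) = 0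
        rw [h, mul_zero]
      · rintro ⟨c0, hc0, hc0v⟩
        refine ⟨T c0, ⟨c0, hc0, rfl⟩, ?_⟩
        show ((lam v : F)) ^ d * c0 (pz v) ≠ 0
        exact mul_ne_zero (pow_ne_zero d (lam v).ne_zero) hc0v
    have hmem' : ∀ z : {Q // Q ∈ Pm},
        z ∈ codeSupp C'' ↔ ∃ c ∈ C'', c z ≠ 0 := by
      intro z
      simp [codeSupp]
    have hbij : (codeSupp (Submodule.map T C'')).card =
        ((Finset.univ : Finset Fˣ) ×ˢ codeSupp C'').card := by
      apply Finset.card_bij (fun v _ => (lam v, pz v))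
      · intro v hv
        rw [Finset.mem_product]
        exact ⟨Finset.mem_univ _, (hmem' (pz v)).mpr ((hmem v).mp hv)⟩
      · intro v1 h1 v2 h2 heq
        have e1 : lam v1 = lam v2 := (Prod.ext_iff.mp heq).1
        have e2 : pz v1 = pz v2 := (Prod.ext_iff.mp heq).2
        apply Subtype.ext
        rw [hveq v1, hveq v2, e1, e2]
      · rintro ⟨l, z⟩ hlz
        rw [Finset.mem_product] at hlz
        refine ⟨⟨(l : F) • z.1, hsmul_ne l z⟩, ?_, ?_⟩
        · obtain ⟨h1, h2⟩ := hlam_pz l z ⟨(l : F) • z.1, hsmul_ne l z⟩ rfl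
          rw [hmem, h2]
          exact (hmem' z).mp hlz.2
        · obtain ⟨h1, h2⟩ := hlam_pz l z ⟨(l : F) • z.1, hsmul_ne l z⟩ rfl
          rw [h1, h2]
    rw [hbij, Finset.card_product, Finset.card_univ, Fintype.card_units]
  constructor
  · rw [hcode]
    exact (Submodule.equivMapOfInjective T hTinj _).finrank_eq.symm
  · intro r _ _
    rw [hcode, ghw_map T hTinj _ hsupp]
end

section
/- (Monotonicity of generalized Hamming weights.) Let C ⊆ F_q^n be a linear code of dimension k > 0. Then 1 ≤ d_1(C) < d_2(C) < ⋯ < d_k(C) ≤ n. -/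
lemma codeSupp_mono {F ι : Type*} [Field F] [Fintype ι]
    {C D : Submodule F (ι → F)} (h : C ≤ D) : codeSupp C ⊆ codeSupp D := by
  intro i hi
  simp only [codeSupp, Finset.mem_filter, Finset.mem_univ, true_and] at hi ⊢
  obtain ⟨c, hc, hci⟩ := hi
  exact ⟨c, h hc, hci⟩

lemma exists_subcode {F : Type*} [Field F] {n : ℕ} (D : Submodule F (Fin n → F)) {r : ℕ}
    (hr : r ≤ Module.finrank F D) :
    ∃ W : Submodule F (Fin n → F), W ≤ D ∧ Module.finrank F W = r := by
  obtain ⟨f, hf⟩ := exists_linearIndependent_of_le_finrank (R := F) (M := D) hr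
  have hind : LinearIndependent F (fun j => (f j : Fin n → F)) :=
    hf.map' D.subtype (Submodule.ker_subtype D)
  refine ⟨Submodule.span F (Set.range fun j => (f j : Fin n → F)), ?_, ?_⟩
  · rw [Submodule.span_le]; rintro _ ⟨j, rfl⟩; exact (f j).2
  · rw [finrank_span_eq_card hind, Fintype.card_fin]

lemma ghw_le {F : Type*} [Field F] {n : ℕ} {C C' : Submodule F (Fin n → F)} {r : ℕ}
    (h : C' ≤ C) (hr : Module.finrank F C' = r) : GHW C r ≤ (codeSupp C').card :=
  Nat.sInf_le ⟨C', h, hr, rfl⟩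

/-- **Monotonicity.** For a linear code `C ⊆ F_q^n` of dimension `k > 0`,
`1 ≤ d_1(C) < d_2(C) < ⋯ < d_k(C) ≤ n`. -/
theorem ghw_strict_mono {F : Type*} [Field F] [Fintype F] {n : ℕ}
    (C : Submodule F (Fin n → F)) (hk : 0 < Module.finrank F C) :
    1 ≤ GHW C 1 ∧
    (∀ r : ℕ, 1 ≤ r → r < Module.finrank F C → GHW C r < GHW C (r + 1)) ∧
    GHW C (Module.finrank F C) ≤ n := by
  -- empty support forces trivial code
  have supp_card_pos : ∀ C' : Submodule F (Fin n → F), 0 < Module.finrank F C' →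
      0 < (codeSupp C').card := by
    intro C' hC'
    rcases Finset.eq_empty_or_nonempty (codeSupp C') with he | hne
    · exfalso
      have : C' = ⊥ := by
        rw [Submodule.eq_bot_iff]
        intro x hx
        funext i
        by_contra hxi
        have : i ∈ codeSupp C' := by
          simp only [codeSupp, Finset.mem_filter, Finset.mem_univ, true_and]
          exact ⟨x, hx, hxi⟩
        simp [he] at this
      rw [this] at hC'
      simp at hC'
    · exact Finset.card_pos.mpr hne
  refine ⟨?_, ?_, ?_⟩
  · -- 1 ≤ GHW C 1
    obtain ⟨W, hWC, hW⟩ := exists_subcode C hk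
    have hne : {k | ∃ C' : Submodule F (Fin n → F),
        C' ≤ C ∧ Module.finrank F C' = 1 ∧ (codeSupp C').card = k}.Nonempty :=
      ⟨(codeSupp W).card, W, hWC, hW, rfl⟩
    obtain ⟨C', hC'C, hC'r, hC'card⟩ := Nat.sInf_mem hne
    rw [GHW, ← hC'card]
    exact supp_card_pos C' (by omega)
  · -- strict monotonicity
    intro r hr1 hrk
    obtain ⟨W, hWC, hW⟩ := exists_subcode C (by omega : r + 1 ≤ Module.finrank F C)
    have hne : {k | ∃ C' : Submodule F (Fin n → F),
        C' ≤ C ∧ Module.finrank F C' = r + 1 ∧ (codeSupp C').card = k}.Nonempty :=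
      ⟨(codeSupp W).card, W, hWC, hW, rfl⟩
    obtain ⟨C', hC'C, hC'r, hC'card⟩ := Nat.sInf_mem hne
    -- pick a coordinate in the support of C'
    have hpos : 0 < (codeSupp C').card := supp_card_pos C' (by omega)
    obtain ⟨i, hi⟩ := Finset.card_pos.mp hpos
    -- kernel of evaluation at i restricted to C'
    set ψ : C' →ₗ[F] F := (LinearMap.proj i).comp C'.subtype with hψ
    set K : Submodule F (Fin n → F) := Submodule.map C'.subtype (LinearMap.ker ψ) with hK
    have hKC' : K ≤ C' := by
      rintro x ⟨y, -, rfl⟩; exact y.2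
    have hKrank : r ≤ Module.finrank F K := by
      have hmap : Module.finrank F K = Module.finrank F (LinearMap.ker ψ) :=
        Submodule.finrank_map_subtype_eq C' (LinearMap.ker ψ)
      have hsum := LinearMap.finrank_range_add_finrank_ker ψ
      have hrange : Module.finrank F (LinearMap.range ψ) ≤ 1 := by
        simpa using Submodule.finrank_le (LinearMap.range ψ)
      omega
    -- every element of K vanishes at i
    have hKi : i ∉ codeSupp K := by
      intro hmem
      simp only [codeSupp, Finset.mem_filter, Finset.mem_univ, true_and] at hmem
      obtain ⟨c, hcK, hci⟩ := hmem
      obtain ⟨y, hy, rfl⟩ := hcK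
      exact hci (LinearMap.mem_ker.mp hy)
    obtain ⟨W', hW'K, hW'r⟩ := exists_subcode K hKrank
    have h1 : GHW C r ≤ (codeSupp W').card := ghw_le (hW'K.trans (hKC'.trans hC'C)) hW'r
    have h2 : codeSupp W' ⊆ (codeSupp C').erase i := by
      intro j hj
      have hjK : j ∈ codeSupp K := codeSupp_mono hW'K hj
      refine Finset.mem_erase.mpr ⟨?_, codeSupp_mono hKC' hjK⟩
      rintro rfl; exact hKi hjK
    calc GHW C r ≤ (codeSupp W').card := h1
      _ ≤ ((codeSupp C').erase i).card := Finset.card_le_card h2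
      _ < (codeSupp C').card := Finset.card_erase_lt_of_mem hi
      _ = GHW C (r + 1) := hC'card
  · -- GHW C k ≤ n
    calc GHW C (Module.finrank F C) ≤ (codeSupp C).card := ghw_le le_rfl rfl
      _ ≤ Fintype.card (Fin n) := Finset.card_le_univ _
      _ = n := Fintype.card_fin n
end
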